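/- Let (X,d) be a separable metric space and let λ be a locally finite Borel regular measure over X of Vitali type with respect to d. Let α and β be locally finite Borel regular measures over X, let 0 < c < ∞, and let A ⊂ X be a set such that the lower derivative satisfies D̲(α,β,x) < c for every x ∈ A. Then α_λ(A) ≤ c·β_λ(A). -/

import Mathlib

open MeasureTheory Metric Filter Set
open scoped ENNReal Topology NNReal

/-- `μ_λ(A) := inf { μ(C) : C Borel, λ(A \ C) = 0 }`. -/
noncomputable def relPart {X : Type*} [MeasurableSpace X]
    (μ lam : Measure X) (A : Set X) : ℝ≥0∞ :=
  ⨅ (C : Set X) (_ : MeasurableSet C) (_ : lam (A \ C) = 0), μ C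

/-- A measure `lam` is of Vitali type with respect to the distance: for every set `A`
and every family `ℬ` of (closed) balls, recorded as pairs (center, radius), such that every
point of `A` is the center of balls of `ℬ` of arbitrarily small radius, there is a countable
disjointed subfamily covering `lam`-almost all of `A`. -/
def IsVitaliType {X : Type*} [MetricSpace X] [MeasurableSpace X] (lam : Measure X) : Prop :=
  ∀ (A : Set X) (ℬ : Set (X × ℝ)),
    (∀ p ∈ ℬ, 0 < p.2) →
    (∀ x ∈ A, ∀ ε > 0, ∃ r : ℝ, 0 < r ∧ r < ε ∧ (x, r) ∈ ℬ) →
    ∃ F ⊆ ℬ, F.Countable ∧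
      (F.PairwiseDisjoint fun p => closedBall p.1 p.2) ∧
      lam (A \ ⋃ p ∈ F, closedBall p.1 p.2) = 0

/-- Lower derivative `D̲(μ,λ,x) = liminf_{r→0⁺} μ(B(x,r))/λ(B(x,r))`
(in `ℝ≥0∞`, with the convention `0/0 = 0`). -/
noncomputable def lowerDeriv {X : Type*} [MetricSpace X] [MeasurableSpace X]
    (μ lam : Measure X) (x : X) : ℝ≥0∞ :=
  Filter.liminf (fun r : ℝ => μ (closedBall x r) / lam (closedBall x r)) (𝓝[>] (0:ℝ))

lemma ratio_le_aux {a b c : ℝ≥0∞} (hc : c < ∞) (h : a / b < c) : a ≤ c * b := by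
  have hc0 : c ≠ 0 := by rintro rfl; simp at h
  rcases eq_or_ne b 0 with rfl | rb
  · rcases eq_or_ne a 0 with rfl | ra
    · simp
    · rw [ENNReal.div_zero ra] at h; exact absurd (h.trans hc) (lt_irrefl _)
  rcases eq_or_ne b ∞ with rfl | rb'
  · simp [ENNReal.mul_top hc0]
  · have := mul_le_mul_left h.le b
    rwa [ENNReal.div_mul_cancel rb rb'] at this


theorem stmt1 {X : Type*} [MetricSpace X] [TopologicalSpace.SeparableSpace X]
    [MeasurableSpace X] [BorelSpace X]
    (lam α β : Measure X) [IsLocallyFiniteMeasure lam] [IsLocallyFiniteMeasure α]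
    [IsLocallyFiniteMeasure β]
    (hVit : IsVitaliType lam)
    (c : ℝ≥0∞) (hc0 : 0 < c) (hc : c < ∞)
    (A : Set X) (hA : ∀ x ∈ A, lowerDeriv α β x < c) :
    relPart α lam A ≤ c * relPart β lam A := by
  haveI := UniformSpace.secondCountable_of_separable X
  have key : ∀ C : Set X, MeasurableSet C → lam (A \ C) = 0 →
      relPart α lam A ≤ c * β C := by
    intro C hC hnull
    rcases eq_or_ne (β C) ∞ with hβC | hβC
    · rw [hβC, ENNReal.mul_top hc0.ne']; exact le_top
    have keyU : ∀ U : Set X, IsOpen U → C ⊆ U → relPart α lam A ≤ c * β U := by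
      intro U hU hCU
      set A' := A ∩ C with hA'
      set ℬ : Set (X × ℝ) := {p | p.1 ∈ A' ∧ 0 < p.2 ∧ closedBall p.1 p.2 ⊆ U ∧
        α (closedBall p.1 p.2) ≤ c * β (closedBall p.1 p.2)} with hℬ
      have hsmall : ∀ x ∈ A', ∀ ε > 0, ∃ r : ℝ, 0 < r ∧ r < ε ∧ (x, r) ∈ ℬ := by
        intro x hx ε hε
        have hxU : x ∈ U := hCU hx.2
        obtain ⟨δ, hδ, hδU⟩ := Metric.isOpen_iff.1 hU x hxU
        have hfr : ∃ᶠ r in 𝓝[>] (0:ℝ),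
            α (closedBall x r) / β (closedBall x r) < c :=
          frequently_lt_of_liminf_lt (h := hA x hx.1)
        have hmem : Ioo (0:ℝ) (min ε (δ/2)) ∈ 𝓝[>] (0:ℝ) :=
          Ioo_mem_nhdsGT_of_mem ⟨le_refl 0, by positivity⟩
        obtain ⟨r, hr1, hr2⟩ :=
          (hfr.and_eventually (eventually_of_mem hmem fun r hr => hr)).exists
        have hrδ : closedBall x r ⊆ U := by
          refine (closedBall_subset_ball ?_).trans hδU
          exact lt_of_lt_of_le hr2.2 ((min_le_right _ _).trans (by linarith))
        exact ⟨r, hr2.1, lt_of_lt_of_le hr2.2 (min_le_left _ _),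
          hx, hr2.1, hrδ, ratio_le_aux hc hr1⟩
      obtain ⟨F, hFB, hFc, hFd, hFnull⟩ := hVit A' ℬ (fun p hp => hp.2.1) hsmall
      set D := ⋃ p ∈ F, closedBall p.1 p.2 with hD
      have hDmeas : MeasurableSet D :=
        MeasurableSet.biUnion hFc (fun p _ => measurableSet_closedBall)
      have hAD : lam (A \ D) = 0 := by
        have hsub : A \ D ⊆ (A' \ D) ∪ (A \ C) := by
          intro x hx
          by_cases hxC : x ∈ C
          · exact Or.inl ⟨⟨hx.1, hxC⟩, hx.2⟩
          · exact Or.inr ⟨hx.1, hxC⟩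
        exact measure_mono_null hsub (measure_union_null hFnull hnull)
      have hαD : α D ≤ c * β U := by
        calc α D ≤ ∑' p : F, α (closedBall (p : X × ℝ).1 (p : X × ℝ).2) :=
              measure_biUnion_le α hFc _
          _ ≤ ∑' p : F, c * β (closedBall (p : X × ℝ).1 (p : X × ℝ).2) :=
              ENNReal.tsum_le_tsum (fun p => (hFB p.2).2.2.2)
          _ = c * ∑' p : F, β (closedBall (p : X × ℝ).1 (p : X × ℝ).2) :=
              ENNReal.tsum_mul_left
          _ = c * β D := by
              rw [measure_biUnion hFc hFd (fun p _ => measurableSet_closedBall)]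
          _ ≤ c * β U :=
              mul_le_mul_right (measure_mono (iUnion₂_subset fun p hp => (hFB hp).2.2.1)) c
      refine le_trans ?_ hαD
      exact iInf₂_le_of_le D hDmeas (iInf_le_of_le hAD le_rfl)
    apply ENNReal.le_of_forall_pos_le_add
    intro ε hε _
    have hδ0 : (ε : ℝ≥0∞) / c ≠ 0 :=
      (ENNReal.div_pos (by exact_mod_cast hε.ne') hc.ne).ne'
    obtain ⟨U, hCU, hUopen, hUβ⟩ :=
      Set.exists_isOpen_lt_of_lt C _ (ENNReal.lt_add_right hβC hδ0)
    calc relPart α lam A ≤ c * β U := keyU U hUopen hCU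
      _ ≤ c * (β C + (ε : ℝ≥0∞) / c) := mul_le_mul_right hUβ.le c
      _ = c * β C + ε := by rw [mul_add, ENNReal.mul_div_cancel hc0.ne' hc.ne]
  rcases eq_or_ne (relPart β lam A) ∞ with htop | htop
  · rw [htop, ENNReal.mul_top hc0.ne']; exact le_top
  apply ENNReal.le_of_forall_pos_le_add
  intro ε hε _
  have hδ0 : (ε : ℝ≥0∞) / c ≠ 0 :=
    (ENNReal.div_pos (by exact_mod_cast hε.ne') hc.ne).ne'
  have hlt : relPart β lam A < relPart β lam A + (ε : ℝ≥0∞) / c :=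
    ENNReal.lt_add_right htop hδ0
  obtain ⟨C, hC, hnull, hCb⟩ : ∃ C, MeasurableSet C ∧ lam (A \ C) = 0 ∧
      β C < relPart β lam A + (ε : ℝ≥0∞) / c := by
    have h := hlt
    rw [relPart] at h
    simp only [iInf_lt_iff] at h
    obtain ⟨C, hC, hn, hb⟩ := h
    exact ⟨C, hC, hn, hb⟩
  calc relPart α lam A ≤ c * β C := key C hC hnull
    _ ≤ c * (relPart β lam A + (ε : ℝ≥0∞) / c) := mul_le_mul_right hCb.le c
    _ = c * relPart β lam A + ε := by
        rw [mul_add, ENNReal.mul_div_cancel hc0.ne' hc.ne]
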